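/- Let {X_i : i ∈ I} be a family of nonempty Hausdorff topological spaces indexed by a nonempty set I. If the product space ∏_{i ∈ I} X_i (with the product topology) is T-locally compact, then each X_i is T-locally compact. -/
import Mathlib

def TLocallyCompact (X : Type*) [TopologicalSpace X] : Prop :=
  ∀ (x : X) (U : Set X), IsOpen U → x ∈ U →
    ∃ V : Set X, IsOpen V ∧ x ∈ V ∧ V ⊆ U ∧ IsCompact (frontier V)

theorem tLocallyCompact_of_pi_t2 {ι : Type*} [Nonempty ι] (X : ι → Type*)
    [∀ i, TopologicalSpace (X i)] [∀ i, T2Space (X i)] [∀ i, Nonempty (X i)]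
    (h : TLocallyCompact (∀ i, X i)) : ∀ i, TLocallyCompact (X i) := by
  classical
  intro i x U hU hxU
  set f : ∀ j, X j := fun j => Classical.arbitrary (X j) with hf
  set s : X i → ∀ j, X j := Function.update f i with hs
  have hce : Topology.IsClosedEmbedding s := isClosedEmbedding_update f i
  have hcont : Continuous s := hce.continuous
  have hUopen : IsOpen ((fun g : ∀ j, X j => g i) ⁻¹' U) := (continuous_apply i).isOpen_preimage U hU
  have hmem : s x ∈ (fun g : ∀ j, X j => g i) ⁻¹' U := by
    simp [hs, Function.update_self, hxU]
  obtain ⟨W, hWopen, hxW, hWsub, hWfr⟩ := h (s x) _ hUopen hmem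
  refine ⟨s ⁻¹' W, hcont.isOpen_preimage W hWopen, hxW, ?_, ?_⟩
  · intro y hy
    have := hWsub hy
    simpa [hs, Function.update_self] using this
  · have hsub : frontier (s ⁻¹' W) ⊆ s ⁻¹' (frontier W) :=
      hcont.frontier_preimage_subset W
    exact (hce.isCompact_preimage hWfr).of_isClosed_subset isClosed_frontier hsub
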